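/- Let N ∈ {2,3} and μ₂ ≥ μ₁ > 0. If either (κ < −1 and β ≥ −(μ₁²μ₂)^{1/3}) or (κ = −1 and β > 0), then system (1) has no positive classical H¹ solution: there is no pair of C² functions u, v : ℝ^N → ℝ with u(x) > 0 and v(x) > 0 for all x, with u, v, ∇u, ∇v ∈ L²(ℝ^N), satisfying −Δu + u = μ₁u³ + βuv² − κv and −Δv + v = μ₂v³ + βu²v − κu pointwise. -/

import Mathlib

open MeasureTheory

/-- The Euclidean Laplacian: sum of second partial derivatives. -/
noncomputable def laplacian {N : ℕ} (u : EuclideanSpace ℝ (Fin N) → ℝ)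
    (x : EuclideanSpace ℝ (Fin N)) : ℝ :=
  ∑ i, iteratedFDeriv ℝ 2 u x ![EuclideanSpace.single i 1, EuclideanSpace.single i 1]

open Metric Set Filter

section Line
variable {H : Type*} [NormedAddCommGroup H] [NormedSpace ℝ H]

lemma line_hasDerivAt (x a : H) (t : ℝ) : HasDerivAt (fun s : ℝ => x + s • a) a t := by
  simpa using ((hasDerivAt_id t).smul_const a).const_add x

lemma line_smooth {w : H → ℝ} {x : H} (hw : ContDiffAt ℝ 2 w x) (a : H) :
    (∀ᶠ t : ℝ in nhds 0, HasDerivAt (fun s : ℝ => w (x + s • a)) (fderiv ℝ w (x + t • a) a) t)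
    ∧ HasDerivAt (fun t : ℝ => fderiv ℝ w (x + t • a) a) (fderiv ℝ (fderiv ℝ w) x a a) 0 := by
  have hev : ∀ᶠ t : ℝ in nhds 0, ContDiffAt ℝ 2 w (x + t • a) := by
    have h1 : ∀ᶠ y in nhds x, ContDiffAt ℝ 2 w y := hw.eventually (by simp)
    have hc : Filter.Tendsto (fun t : ℝ => x + t • a) (nhds 0) (nhds x) := by
      simpa using (line_hasDerivAt x a 0).continuousAt.tendsto
    exact hc.eventually h1
  constructor
  · filter_upwards [hev] with t ht
    exact (ht.differentiableAt (by norm_num)).hasFDerivAt.comp_hasDerivAt t (line_hasDerivAt x a t)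
  · have h1 : ContDiffAt ℝ 1 (fderiv ℝ w) x := hw.fderiv_right (le_refl _)
    have h2 : HasFDerivAt (fderiv ℝ w) (fderiv ℝ (fderiv ℝ w) x) x :=
      (h1.differentiableAt one_ne_zero).hasFDerivAt
    have h3 : HasDerivAt (fun t : ℝ => fderiv ℝ w (x + t • a)) (fderiv ℝ (fderiv ℝ w) x a) 0 := by
      have h4 : HasFDerivAt (fderiv ℝ w) (fderiv ℝ (fderiv ℝ w) x) (x + (0:ℝ) • a) := by
        simpa using h2
      exact h4.comp_hasDerivAt 0 (line_hasDerivAt x a 0)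
    simpa using h3.clm_apply (hasDerivAt_const 0 a)

lemma second_deriv_line {w : H → ℝ} {x : H} (hw : ContDiffAt ℝ 2 w x) (a : H) :
    deriv (deriv (fun t : ℝ => w (x + t • a))) 0 = fderiv ℝ (fderiv ℝ w) x a a := by
  obtain ⟨hg', hD⟩ := line_smooth hw a
  have e1 : deriv (fun s : ℝ => w (x + s • a)) =ᶠ[nhds 0]
      fun t => fderiv ℝ w (x + t • a) a := by
    filter_upwards [hg'] with t ht using ht.deriv
  rw [e1.deriv_eq, hD.deriv]

end Line
section Test
variable {H : Type*} [NormedAddCommGroup H] [NormedSpace ℝ H]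

lemma second_deriv_nonneg_of_isLocalMin {w : H → ℝ} {x : H} (hw : ContDiffAt ℝ 2 w x)
    (hmin : IsLocalMin w x) (a : H) :
    0 ≤ deriv (deriv (fun t : ℝ => w (x + t • a))) 0 := by
  by_contra hL
  push_neg at hL
  rw [second_deriv_line hw a] at hL
  obtain ⟨hg', hD⟩ := line_smooth hw a
  set φ : ℝ → ℝ := fun t => fderiv ℝ w (x + t • a) a with hφ
  have hφ0 : φ 0 = 0 := by
    have h0 : fderiv ℝ w x = 0 := hmin.fderiv_eq_zero
    simp [hφ, h0]
  -- slope of φ tends to negative limit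
  have hslope : ∀ᶠ t in nhdsWithin (0:ℝ) {(0:ℝ)}ᶜ, slope φ 0 t < 0 :=
    (hasDerivAt_iff_tendsto_slope.mp hD).eventually_lt_const hL
  have hslope' : ∀ᶠ t in nhds (0:ℝ), t ≠ 0 → slope φ 0 t < 0 := by
    rwa [eventually_nhdsWithin_iff] at hslope
  -- local min along the line
  have hminline : ∀ᶠ t : ℝ in nhds 0, w x ≤ w (x + t • a) := by
    have hc : Filter.Tendsto (fun t : ℝ => x + t • a) (nhds 0) (nhds x) := by
      simpa using (line_hasDerivAt x a 0).continuousAt.tendsto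
    exact hc.eventually hmin
  obtain ⟨ε, hε, hall⟩ := Metric.eventually_nhds_iff.mp (hg'.and (hslope'.and hminline))
  set δ : ℝ := ε / 2 with hδ
  have hδ0 : 0 < δ := by positivity
  have hmem : ∀ t ∈ Icc (0:ℝ) δ, dist t 0 < ε := by
    intro t ht
    rw [Real.dist_eq, sub_zero, abs_of_nonneg ht.1]
    exact lt_of_le_of_lt ht.2 (by rw [hδ]; linarith)
  have hcont : ContinuousOn (fun t : ℝ => w (x + t • a)) (Icc 0 δ) := fun t ht =>
    ((hall (hmem t ht)).1.continuousAt).continuousWithinAt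
  have hderiv : ∀ t ∈ interior (Icc (0:ℝ) δ), deriv (fun t : ℝ => w (x + t • a)) t < 0 := by
    intro t ht
    rw [interior_Icc] at ht
    have h1 := hall (hmem t ⟨ht.1.le, ht.2.le⟩)
    rw [h1.1.deriv]
    have hs : slope φ 0 t < 0 := h1.2.1 ht.1.ne'
    rw [slope_def_field, hφ0, sub_zero, sub_zero] at hs
    show φ t < 0
    rcases div_neg_iff.mp hs with ⟨_, h⟩ | ⟨h, _⟩
    · linarith [ht.1]
    · exact h
  have hanti : StrictAntiOn (fun t : ℝ => w (x + t • a)) (Icc 0 δ) :=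
    strictAntiOn_of_deriv_neg (convex_Icc 0 δ) hcont hderiv
  have h2 := hanti (left_mem_Icc.mpr hδ0.le) (right_mem_Icc.mpr hδ0.le) hδ0
  have h3 := (hall (hmem δ (right_mem_Icc.mpr hδ0.le))).2.2
  simp only [zero_smul, add_zero] at h2
  linarith

end Test
section Lap
variable {N : ℕ}

lemma laplacian_eq_sum {w : EuclideanSpace ℝ (Fin N) → ℝ} {x : EuclideanSpace ℝ (Fin N)}
    (hw : ContDiffAt ℝ 2 w x) :
    laplacian w x
      = ∑ i, deriv (deriv (fun t : ℝ => w (x + t • EuclideanSpace.single i 1))) 0 := by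
  unfold laplacian
  refine Finset.sum_congr rfl fun i _ => ?_
  rw [iteratedFDeriv_two_apply]
  simp only [Matrix.cons_val_zero, Matrix.cons_val_one, Matrix.head_cons]
  exact (second_deriv_line hw _).symm

lemma laplacian_nonneg_of_isLocalMin {w : EuclideanSpace ℝ (Fin N) → ℝ}
    {x : EuclideanSpace ℝ (Fin N)} (hw : ContDiffAt ℝ 2 w x) (hmin : IsLocalMin w x) :
    0 ≤ laplacian w x := by
  rw [laplacian_eq_sum hw]
  exact Finset.sum_nonneg fun i _ => second_deriv_nonneg_of_isLocalMin hw hmin _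

lemma min_principle (hN : N ≠ 0) (R₀ R : ℝ) (hR₀ : 0 < R₀)
    (w : EuclideanSpace ℝ (Fin N) → ℝ)
    (hcont : ContinuousOn w {x | R₀ ≤ ‖x‖ ∧ ‖x‖ ≤ R})
    (hsmooth : ∀ x : EuclideanSpace ℝ (Fin N), R₀ < ‖x‖ → ‖x‖ < R → ContDiffAt ℝ 2 w x)
    (hlap : ∀ x : EuclideanSpace ℝ (Fin N), R₀ < ‖x‖ → ‖x‖ < R → laplacian w x < 0)
    (hbdry : ∀ x : EuclideanSpace ℝ (Fin N), ‖x‖ = R₀ ∨ ‖x‖ = R → 0 ≤ w x) :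
    ∀ x : EuclideanSpace ℝ (Fin N), R₀ ≤ ‖x‖ → ‖x‖ ≤ R → 0 ≤ w x := by
  haveI : Nonempty (Fin N) := ⟨⟨0, Nat.pos_of_ne_zero hN⟩⟩
  rcases le_or_gt R R₀ with hRR | hRR
  ·
    intro x hx1 hx2
    exact hbdry x (Or.inl (le_antisymm (hx2.trans hRR) hx1))
  set A : Set (EuclideanSpace ℝ (Fin N)) := {x | R₀ ≤ ‖x‖ ∧ ‖x‖ ≤ R} with hA
  have hAclosed : IsClosed A := by
    have : A = (fun x : EuclideanSpace ℝ (Fin N) => ‖x‖) ⁻¹' (Set.Icc R₀ R) := by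
      ext x; simp [hA, Set.mem_Icc]
    rw [this]; exact isClosed_Icc.preimage continuous_norm
  have hAcomp : IsCompact A := by
    refine Metric.isCompact_of_isClosed_isBounded hAclosed ?_
    refine (Metric.isBounded_closedBall (x := (0 : EuclideanSpace ℝ (Fin N))) (r := R)).subset ?_
    intro x hx
    simpa [Metric.mem_closedBall] using hx.2
  have hAne : A.Nonempty := by
    refine ⟨EuclideanSpace.single (Classical.arbitrary (Fin N)) R₀, ?_⟩
    have hn : ‖EuclideanSpace.single (Classical.arbitrary (Fin N)) R₀‖ = R₀ := by
      rw [EuclideanSpace.norm_single]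
      exact abs_of_pos hR₀
    exact ⟨le_of_eq hn.symm, hn.le.trans hRR.le⟩
  obtain ⟨z, hz, hzmin⟩ := hAcomp.exists_isMinOn hAne hcont
  have hz0 : 0 ≤ w z := by
    rcases eq_or_lt_of_le hz.1 with h1 | h1
    · exact hbdry z (Or.inl h1.symm)
    rcases eq_or_lt_of_le hz.2 with h2 | h2
    · exact hbdry z (Or.inr h2)
    exfalso
    have hU : IsOpen {x : EuclideanSpace ℝ (Fin N) | R₀ < ‖x‖ ∧ ‖x‖ < R} := by
      have : {x : EuclideanSpace ℝ (Fin N) | R₀ < ‖x‖ ∧ ‖x‖ < R}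
          = (fun x : EuclideanSpace ℝ (Fin N) => ‖x‖) ⁻¹' (Set.Ioo R₀ R) := by
        ext x; simp [Set.mem_Ioo]
      rw [this]; exact isOpen_Ioo.preimage continuous_norm
    have hAnz : A ∈ nhds z := by
      rw [_root_.mem_nhds_iff]
      exact ⟨_, fun y hy => ⟨hy.1.le, hy.2.le⟩, hU, ⟨h1, h2⟩⟩
    have hloc : IsLocalMin w z := hzmin.isLocalMin hAnz
    exact absurd (laplacian_nonneg_of_isLocalMin (hsmooth z h1 h2) hloc)
      (not_le.mpr (hlap z h1 h2))
  exact fun x hx1 hx2 => hz0.trans (hzmin ⟨hx1, hx2⟩)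

end Lap
section OneD

lemma differentiableAt_deriv_of_contDiffAt {f : ℝ → ℝ} {x : ℝ} (hf : ContDiffAt ℝ 2 f x) :
    DifferentiableAt ℝ (deriv f) x := by
  obtain ⟨u, hu, hcd⟩ := hf.contDiffOn (le_refl 2) (by simp)
  obtain ⟨t, htu, hto, hxt⟩ := _root_.mem_nhds_iff.mp hu
  have h1 : ContDiffOn ℝ 1 (deriv f) t :=
    ((hcd.mono htu).deriv_of_isOpen hto (by norm_num))
  exact (h1.differentiableOn one_ne_zero).differentiableAt (hto.mem_nhds hxt)

lemma deriv2_combo {f g : ℝ → ℝ} (hf : ContDiffAt ℝ 2 f 0) (hg : ContDiffAt ℝ 2 g 0)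
    (c b : ℝ) :
    deriv (deriv (fun t => f t + c * g t + b)) 0
      = deriv (deriv f) 0 + c * deriv (deriv g) 0 := by
  have hev : deriv (fun t => f t + c * g t + b)
      =ᶠ[nhds (0:ℝ)] fun t => deriv f t + c * deriv g t := by
    filter_upwards [hf.eventually (by simp), hg.eventually (by simp)] with t hft hgt
    have h1 : DifferentiableAt ℝ f t := hft.differentiableAt (by norm_num)
    have h2 : DifferentiableAt ℝ g t := hgt.differentiableAt (by norm_num)
    exact ((h1.hasDerivAt.add ((h2.hasDerivAt).const_mul c)).add_const b).deriv
  rw [hev.deriv_eq]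
  have hdf := differentiableAt_deriv_of_contDiffAt hf
  have hdg := differentiableAt_deriv_of_contDiffAt hg
  rw [deriv_fun_add hdf (hdg.const_mul c), deriv_const_mul c hdg]

lemma deriv2_rpow (A B : ℝ) (hA : 0 < A) (e : ℝ) :
    deriv (deriv (fun t : ℝ => (A + B * t + t * t) ^ e)) 0
      = e * (e - 1) * A ^ (e - 2) * B ^ 2 + 2 * e * A ^ (e - 1) := by
  have hp : ∀ t : ℝ, HasDerivAt (fun t : ℝ => A + B * t + t * t) (B + 2 * t) t := by
    intro t
    have h := (((hasDerivAt_id' (x := t)).const_mul B).const_add A).add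
      ((hasDerivAt_id' (x := t)).mul (hasDerivAt_id' (x := t)))
    exact h.congr_deriv (by ring)
  have hp0 : ∀ᶠ t in nhds (0:ℝ), 0 < A + B * t + t * t := by
    have hc : Filter.Tendsto (fun t : ℝ => A + B * t + t * t) (nhds 0) (nhds A) := by
      have := (hp 0).continuousAt.tendsto
      simpa using this
    exact hc.eventually (eventually_gt_nhds hA)
  have hd1 : ∀ᶠ t in nhds (0:ℝ), HasDerivAt (fun t : ℝ => (A + B * t + t * t) ^ e)
      ((B + 2 * t) * e * (A + B * t + t * t) ^ (e - 1)) t := by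
    filter_upwards [hp0] with t ht
    exact (hp t).rpow_const (Or.inl ht.ne')
  have hev : deriv (fun t : ℝ => (A + B * t + t * t) ^ e)
      =ᶠ[nhds (0:ℝ)] fun t => (B + 2 * t) * e * (A + B * t + t * t) ^ (e - 1) := by
    filter_upwards [hd1] with t ht using ht.deriv
  rw [hev.deriv_eq]
  have h1 : HasDerivAt (fun t : ℝ => (A + B * t + t * t) ^ (e - 1))
      ((B + 2 * 0) * (e - 1) * (A + B * 0 + 0 * 0) ^ (e - 1 - 1)) 0 :=
    (hp 0).rpow_const (Or.inl (by norm_num; exact hA.ne'))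
  have hg1 : HasDerivAt (fun t : ℝ => (B + 2 * t) * e) (2 * e) 0 := by
    simpa using (((hasDerivAt_id' (x := (0:ℝ))).const_mul 2).const_add B).mul_const e
  have h2 := hg1.fun_mul h1
  rw [h2.deriv]
  have hA0 : A + B * 0 + 0 * 0 = A := by ring
  rw [hA0, show e - 1 - 1 = e - 2 by ring]
  ring

lemma deriv2_log (A B : ℝ) (hA : 0 < A) :
    deriv (deriv (fun t : ℝ => Real.log (A + B * t + t * t))) 0
      = 2 / A - B ^ 2 / A ^ 2 := by
  have hp : ∀ t : ℝ, HasDerivAt (fun t : ℝ => A + B * t + t * t) (B + 2 * t) t := by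
    intro t
    have h := (((hasDerivAt_id' (x := t)).const_mul B).const_add A).add
      ((hasDerivAt_id' (x := t)).mul (hasDerivAt_id' (x := t)))
    exact h.congr_deriv (by ring)
  have hp0 : ∀ᶠ t in nhds (0:ℝ), 0 < A + B * t + t * t := by
    have hc : Filter.Tendsto (fun t : ℝ => A + B * t + t * t) (nhds 0) (nhds A) := by
      have := (hp 0).continuousAt.tendsto
      simpa using this
    exact hc.eventually (eventually_gt_nhds hA)
  have hev : deriv (fun t : ℝ => Real.log (A + B * t + t * t))
      =ᶠ[nhds (0:ℝ)] fun t => (B + 2 * t) / (A + B * t + t * t) := by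
    filter_upwards [hp0] with t ht using ((hp t).log ht.ne').deriv
  rw [hev.deriv_eq]
  have hg1 : HasDerivAt (fun t : ℝ => B + 2 * t) 2 0 := by
    simpa using ((hasDerivAt_id' (x := (0:ℝ))).const_mul 2).const_add B
  have h2 := hg1.fun_div (hp 0) (by norm_num; exact hA.ne')
  rw [h2.deriv]
  have hA0 : A + B * 0 + 0 * 0 = A := by ring
  rw [hA0]
  field_simp
  ring

end OneD
section Radial
variable {N : ℕ}

lemma line_norm_sq (x : EuclideanSpace ℝ (Fin N)) (i : Fin N) (t : ℝ) :
    ‖x + t • EuclideanSpace.single i (1:ℝ)‖ ^ 2 = ‖x‖ ^ 2 + (2 * x i) * t + t * t := by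
  rw [norm_add_sq_real, real_inner_smul_right, norm_smul, EuclideanSpace.norm_single,
    EuclideanSpace.inner_single_right]
  simp only [RCLike.conj_to_real, norm_one, Real.norm_eq_abs, mul_pow, sq_abs]
  ring

lemma sum_coord_sq (x : EuclideanSpace ℝ (Fin N)) : ∑ i, (x i) ^ 2 = ‖x‖ ^ 2 := by
  rw [EuclideanSpace.norm_eq, Real.sq_sqrt (by positivity)]
  exact Finset.sum_congr rfl fun i _ => by rw [Real.norm_eq_abs, sq_abs]

lemma contDiffAt_radial_rpow (e : ℝ) {x : EuclideanSpace ℝ (Fin N)} (hx : x ≠ 0) :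
    ContDiffAt ℝ 2 (fun y : EuclideanSpace ℝ (Fin N) => (‖y‖ ^ 2) ^ e) x := by
  have hA : (0:ℝ) < ‖x‖ ^ 2 := by
    have : ‖x‖ ≠ 0 := norm_ne_zero_iff.mpr hx
    positivity
  exact (Real.contDiffAt_rpow_const_of_ne hA.ne').comp x
    ((contDiff_norm_sq (𝕜 := ℝ)).contDiffAt)

lemma contDiffAt_radial_log {x : EuclideanSpace ℝ (Fin N)} (hx : x ≠ 0) :
    ContDiffAt ℝ 2 (fun y : EuclideanSpace ℝ (Fin N) => Real.log (‖y‖ ^ 2)) x := by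
  have hA : (0:ℝ) < ‖x‖ ^ 2 := by
    have : ‖x‖ ≠ 0 := norm_ne_zero_iff.mpr hx
    positivity
  exact ((contDiff_norm_sq (𝕜 := ℝ)).contDiffAt).log hA.ne'

lemma laplacian_radial_rpow (e : ℝ) {x : EuclideanSpace ℝ (Fin N)} (hx : x ≠ 0) :
    laplacian (fun y : EuclideanSpace ℝ (Fin N) => (‖y‖ ^ 2) ^ e) x
      = (4 * e * (e - 1) + 2 * N * e) * (‖x‖ ^ 2) ^ (e - 1) := by
  have hA : (0:ℝ) < ‖x‖ ^ 2 := by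
    have : ‖x‖ ≠ 0 := norm_ne_zero_iff.mpr hx
    positivity
  rw [laplacian_eq_sum (contDiffAt_radial_rpow e hx)]
  have hterm : ∀ i : Fin N,
      deriv (deriv (fun t : ℝ => (‖x + t • EuclideanSpace.single i (1:ℝ)‖ ^ 2) ^ e)) 0
        = e * (e - 1) * (‖x‖ ^ 2) ^ (e - 2) * (2 * x i) ^ 2
          + 2 * e * (‖x‖ ^ 2) ^ (e - 1) := by
    intro i
    rw [show (fun t : ℝ => (‖x + t • EuclideanSpace.single i (1:ℝ)‖ ^ 2) ^ e)
        = fun t : ℝ => (‖x‖ ^ 2 + (2 * x i) * t + t * t) ^ e from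
      funext fun t => by rw [line_norm_sq]]
    exact deriv2_rpow _ _ hA e
  rw [Finset.sum_congr rfl fun i _ => hterm i, Finset.sum_add_distrib, Finset.sum_const,
    Finset.card_univ, Fintype.card_fin]
  have h4 : ∑ i : Fin N, e * (e - 1) * (‖x‖ ^ 2) ^ (e - 2) * (2 * x i) ^ 2
      = e * (e - 1) * (‖x‖ ^ 2) ^ (e - 2) * 4 * ‖x‖ ^ 2 := by
    rw [← sum_coord_sq x, Finset.mul_sum]
    exact Finset.sum_congr rfl fun i _ => by ring
  rw [h4]
  have h5 : (‖x‖ ^ 2 : ℝ) ^ (e - 2) * ‖x‖ ^ 2 = (‖x‖ ^ 2) ^ (e - 1) := by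
    rw [← Real.rpow_add_one hA.ne' (e - 2)]
    congr 1
    ring
  calc e * (e - 1) * (‖x‖ ^ 2) ^ (e - 2) * 4 * ‖x‖ ^ 2 + N • (2 * e * (‖x‖ ^ 2) ^ (e - 1))
      = 4 * e * (e - 1) * ((‖x‖ ^ 2) ^ (e - 2) * ‖x‖ ^ 2)
        + 2 * N * e * (‖x‖ ^ 2) ^ (e - 1) := by
        rw [nsmul_eq_mul]; ring
    _ = (4 * e * (e - 1) + 2 * N * e) * (‖x‖ ^ 2) ^ (e - 1) := by rw [h5]; ring

lemma laplacian_radial_log {x : EuclideanSpace ℝ (Fin N)} (hx : x ≠ 0) :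
    laplacian (fun y : EuclideanSpace ℝ (Fin N) => Real.log (‖y‖ ^ 2)) x
      = (2 * N - 4) / ‖x‖ ^ 2 := by
  have hA : (0:ℝ) < ‖x‖ ^ 2 := by
    have : ‖x‖ ≠ 0 := norm_ne_zero_iff.mpr hx
    positivity
  rw [laplacian_eq_sum (contDiffAt_radial_log hx)]
  have hterm : ∀ i : Fin N,
      deriv (deriv (fun t : ℝ => Real.log (‖x + t • EuclideanSpace.single i (1:ℝ)‖ ^ 2))) 0
        = 2 / ‖x‖ ^ 2 - (2 * x i) ^ 2 / (‖x‖ ^ 2) ^ 2 := by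
    intro i
    rw [show (fun t : ℝ => Real.log (‖x + t • EuclideanSpace.single i (1:ℝ)‖ ^ 2))
        = fun t : ℝ => Real.log (‖x‖ ^ 2 + (2 * x i) * t + t * t) from
      funext fun t => by rw [line_norm_sq]]
    exact deriv2_log _ _ hA
  rw [Finset.sum_congr rfl fun i _ => hterm i, Finset.sum_sub_distrib, Finset.sum_const,
    Finset.card_univ, Fintype.card_fin]
  have h4 : ∑ i : Fin N, (2 * x i) ^ 2 / (‖x‖ ^ 2) ^ 2 = 4 / ‖x‖ ^ 2 := by
    rw [show (4 : ℝ) / ‖x‖ ^ 2 = 4 / (‖x‖ ^ 2) ^ 2 * ‖x‖ ^ 2 by field_simp,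
      ← sum_coord_sq x, Finset.mul_sum]
    exact Finset.sum_congr rfl fun i _ => by ring
  rw [h4, nsmul_eq_mul]
  field_simp

end Radial
section Combo
variable {N : ℕ}

lemma contDiffAt_comp_line {H : Type*} [NormedAddCommGroup H] [NormedSpace ℝ H]
    {w : H → ℝ} {x a : H} (hw : ContDiffAt ℝ 2 w x) :
    ContDiffAt ℝ 2 (fun t : ℝ => w (x + t • a)) 0 := by
  have hline : ContDiff ℝ 2 (fun t : ℝ => x + t • a) :=
    contDiff_const.add (contDiff_id.smul contDiff_const)
  have hw' : ContDiffAt ℝ 2 w ((fun t : ℝ => x + t • a) 0) := by simpa using hw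
  exact hw'.comp 0 hline.contDiffAt

lemma laplacian_combo {f g : EuclideanSpace ℝ (Fin N) → ℝ} {x : EuclideanSpace ℝ (Fin N)}
    (hf : ContDiffAt ℝ 2 f x) (hg : ContDiffAt ℝ 2 g x) (c b : ℝ) :
    laplacian (fun y => f y + c * g y + b) x = laplacian f x + c * laplacian g x := by
  have hc : ContDiffAt ℝ 2 (fun y => f y + c * g y + b) x :=
    (hf.add (contDiffAt_const.mul hg)).add contDiffAt_const
  rw [laplacian_eq_sum hc, laplacian_eq_sum hf, laplacian_eq_sum hg, Finset.mul_sum,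
    ← Finset.sum_add_distrib]
  refine Finset.sum_congr rfl fun i _ => ?_
  exact deriv2_combo (contDiffAt_comp_line hf) (contDiffAt_comp_line hg) c b

end Combo

section AMGM

lemma cube_ineq (μ₁ μ₂ : ℝ) (hμ₁ : 0 < μ₁) (hμ₁₂ : μ₁ ≤ μ₂) {a b : ℝ} (ha : 0 ≤ a)
    (hb : 0 ≤ b) :
    (μ₁ ^ 2 * μ₂) ^ ((1:ℝ)/3) * (a ^ 2 * b + a * b ^ 2) ≤ μ₁ * a ^ 3 + μ₂ * b ^ 3 := by
  have hμ₂ : 0 < μ₂ := lt_of_lt_of_le hμ₁ hμ₁₂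
  have hp₁ : (0:ℝ) ≤ μ₁ * a ^ 3 := by positivity
  have hp₂ : (0:ℝ) ≤ μ₂ * b ^ 3 := by positivity
  have key1 : (μ₁ ^ 2 * μ₂) ^ ((1:ℝ)/3) * (a ^ 2 * b)
      ≤ (2/3) * (μ₁ * a ^ 3) + (1/3) * (μ₂ * b ^ 3) := by
    have hg := Real.geom_mean_le_arith_mean2_weighted (by norm_num : (0:ℝ) ≤ 2/3)
      (by norm_num : (0:ℝ) ≤ 1/3) hp₁ hp₂ (by norm_num)
    have he : (μ₁ * a ^ 3) ^ ((2:ℝ)/3) * (μ₂ * b ^ 3) ^ ((1:ℝ)/3)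
        = (μ₁ ^ 2 * μ₂) ^ ((1:ℝ)/3) * (a ^ 2 * b) := by
      rw [Real.mul_rpow hμ₁.le (by positivity), Real.mul_rpow hμ₂.le (by positivity),
        Real.mul_rpow (by positivity) hμ₂.le,
        ← Real.rpow_natCast a 3, ← Real.rpow_natCast b 3, ← Real.rpow_natCast μ₁ 2,
        ← Real.rpow_mul ha, ← Real.rpow_mul hb, ← Real.rpow_mul hμ₁.le]
      norm_num
      ring
    rw [← he]
    exact hg
  have hc' : (μ₁ ^ 2 * μ₂) ^ ((1:ℝ)/3) ≤ (μ₁ * μ₂ ^ 2) ^ ((1:ℝ)/3) := by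
    apply Real.rpow_le_rpow (by positivity) _ (by norm_num)
    nlinarith [mul_le_mul_of_nonneg_left hμ₁₂ (le_of_lt (mul_pos hμ₁ hμ₂))]
  have key2 : (μ₁ ^ 2 * μ₂) ^ ((1:ℝ)/3) * (a * b ^ 2)
      ≤ (1/3) * (μ₁ * a ^ 3) + (2/3) * (μ₂ * b ^ 3) := by
    have hg := Real.geom_mean_le_arith_mean2_weighted (by norm_num : (0:ℝ) ≤ 1/3)
      (by norm_num : (0:ℝ) ≤ 2/3) hp₁ hp₂ (by norm_num)
    have he : (μ₁ * a ^ 3) ^ ((1:ℝ)/3) * (μ₂ * b ^ 3) ^ ((2:ℝ)/3)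
        = (μ₁ * μ₂ ^ 2) ^ ((1:ℝ)/3) * (a * b ^ 2) := by
      rw [Real.mul_rpow hμ₁.le (by positivity), Real.mul_rpow hμ₂.le (by positivity),
        Real.mul_rpow hμ₁.le (by positivity),
        ← Real.rpow_natCast a 3, ← Real.rpow_natCast b 3, ← Real.rpow_natCast μ₂ 2,
        ← Real.rpow_mul ha, ← Real.rpow_mul hb, ← Real.rpow_mul hμ₂.le]
      norm_num
      ring
    calc (μ₁ ^ 2 * μ₂) ^ ((1:ℝ)/3) * (a * b ^ 2)
        ≤ (μ₁ * μ₂ ^ 2) ^ ((1:ℝ)/3) * (a * b ^ 2) :=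
          mul_le_mul_of_nonneg_right hc' (by positivity)
      _ ≤ (1/3) * (μ₁ * a ^ 3) + (2/3) * (μ₂ * b ^ 3) := by rw [← he]; exact hg
  nlinarith [key1, key2]

end AMGM
section Comparison

lemma rpow_normsq {N : ℕ} (x : EuclideanSpace ℝ (Fin N)) :
    ((‖x‖ ^ 2 : ℝ)) ^ (-(1/2) : ℝ) = ‖x‖⁻¹ := by
  rw [← Real.rpow_natCast ‖x‖ 2, ← Real.rpow_mul (norm_nonneg x)]
  norm_num
  exact Real.rpow_neg_one _

lemma comparison3 (S : EuclideanSpace ℝ (Fin 3) → ℝ) (hS : ContDiff ℝ 2 S)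
    (hpos : ∀ y, 0 < S y) (hlap : ∀ y, laplacian S y < 0) (m₀ : ℝ) (hm₀ : 0 < m₀)
    (hsphere : ∀ y : EuclideanSpace ℝ (Fin 3), ‖y‖ = 1 → m₀ ≤ S y) :
    ∀ x : EuclideanSpace ℝ (Fin 3), 1 ≤ ‖x‖ → m₀ * ‖x‖⁻¹ ≤ S x := by
  have hne : ∀ y : EuclideanSpace ℝ (Fin 3), (1:ℝ) ≤ ‖y‖ → y ≠ 0 := by
    intro y hy h
    rw [h, norm_zero] at hy
    linarith
  intro x hx
  have key : ∀ R : ℝ, max ‖x‖ 1 < R → m₀ * ‖x‖⁻¹ - m₀ / R ≤ S x := by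
    intro R hR
    have hR1 : (1:ℝ) < R := lt_of_le_of_lt (le_max_right _ _) hR
    set w : EuclideanSpace ℝ (Fin 3) → ℝ :=
      fun y => S y + (-m₀) * ((‖y‖ ^ 2 : ℝ)) ^ (-(1/2) : ℝ) + m₀ / R with hw
    have happ := min_principle (N := 3) (by norm_num) 1 R one_pos w ?_ ?_ ?_ ?_ x hx
      ((le_max_left _ _).trans hR.le)
    · rw [hw] at happ
      simp only [rpow_normsq x] at happ
      linarith
    · -- continuity on annulus
      intro y hy
      have hy0 : y ≠ 0 := hne y hy.1
      exact (((hS.continuous.continuousAt).add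
        (continuousAt_const.mul (contDiffAt_radial_rpow (-(1/2)) hy0).continuousAt)).add
        continuousAt_const).continuousWithinAt
    · intro y hy1 hy2
      exact (hS.contDiffAt.add
        (contDiffAt_const.mul (contDiffAt_radial_rpow (-(1/2)) (hne y hy1.le)))).add
        contDiffAt_const
    · intro y hy1 hy2
      have hy0 : y ≠ 0 := hne y hy1.le
      rw [hw, laplacian_combo hS.contDiffAt (contDiffAt_radial_rpow (-(1/2)) hy0) (-m₀) (m₀ / R),
        laplacian_radial_rpow (-(1/2)) hy0]
      have hcoef : (4 * (-(1/2):ℝ) * (-(1/2) - 1) + 2 * (3:ℕ) * (-(1/2))) = 0 := by norm_num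
      rw [hcoef, zero_mul, mul_zero, add_zero]
      exact hlap y
    · intro y hy
      rcases hy with hy | hy
      · have h1 : ((‖y‖ ^ 2 : ℝ)) ^ (-(1/2) : ℝ) = 1 := by
          rw [hy]; norm_num
        have h2 : 0 < m₀ / R := by positivity
        have := hsphere y hy
        rw [hw]
        simp only [h1]
        linarith
      · have h1 : ((‖y‖ ^ 2 : ℝ)) ^ (-(1/2) : ℝ) = R⁻¹ := by rw [rpow_normsq, hy]
        have := (hpos y).le
        rw [hw]
        simp only [h1]
        rw [div_eq_mul_inv]
        linarith
  have hlim : Filter.Tendsto (fun R : ℝ => m₀ * ‖x‖⁻¹ - m₀ / R) Filter.atTop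
      (nhds (m₀ * ‖x‖⁻¹ - 0)) :=
    Filter.Tendsto.sub tendsto_const_nhds (Filter.Tendsto.const_div_atTop Filter.tendsto_id m₀)
  have := le_of_tendsto hlim ((Filter.eventually_gt_atTop (max ‖x‖ 1)).mono fun R hR => key R hR)
  simpa using this

lemma comparison2 (S : EuclideanSpace ℝ (Fin 2) → ℝ) (hS : ContDiff ℝ 2 S)
    (hpos : ∀ y, 0 < S y) (hlap : ∀ y, laplacian S y < 0) (m₀ : ℝ) (hm₀ : 0 < m₀)
    (hsphere : ∀ y : EuclideanSpace ℝ (Fin 2), ‖y‖ = 1 → m₀ ≤ S y) :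
    ∀ x : EuclideanSpace ℝ (Fin 2), 1 ≤ ‖x‖ → m₀ ≤ S x := by
  have hne : ∀ y : EuclideanSpace ℝ (Fin 2), (1:ℝ) ≤ ‖y‖ → y ≠ 0 := by
    intro y hy h
    rw [h, norm_zero] at hy
    linarith
  intro x hx
  have hlogx : 0 ≤ Real.log (‖x‖ ^ 2) := Real.log_nonneg (by nlinarith)
  have key : ∀ R : ℝ, max ‖x‖ 1 < R → m₀ - m₀ * Real.log (‖x‖ ^ 2) / Real.log (R ^ 2) ≤ S x := by
    intro R hR
    have hR1 : (1:ℝ) < R := lt_of_le_of_lt (le_max_right _ _) hR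
    have hlogR : 0 < Real.log (R ^ 2) := Real.log_pos (by nlinarith)
    set w : EuclideanSpace ℝ (Fin 2) → ℝ :=
      fun y => S y + (m₀ / Real.log (R ^ 2)) * Real.log (‖y‖ ^ 2) + (-m₀) with hw
    have happ := min_principle (N := 2) (by norm_num) 1 R one_pos w ?_ ?_ ?_ ?_ x hx
      ((le_max_left _ _).trans hR.le)
    · rw [hw] at happ
      have : m₀ / Real.log (R ^ 2) * Real.log (‖x‖ ^ 2)
          = m₀ * Real.log (‖x‖ ^ 2) / Real.log (R ^ 2) := by ring
      linarith [happ, this.symm.le]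
    · intro y hy
      have hy0 : y ≠ 0 := hne y hy.1
      exact (((hS.continuous.continuousAt).add
        (continuousAt_const.mul (contDiffAt_radial_log hy0).continuousAt)).add
        continuousAt_const).continuousWithinAt
    · intro y hy1 hy2
      exact (hS.contDiffAt.add
        (contDiffAt_const.mul (contDiffAt_radial_log (hne y hy1.le)))).add contDiffAt_const
    · intro y hy1 hy2
      have hy0 : y ≠ 0 := hne y hy1.le
      rw [hw, laplacian_combo hS.contDiffAt (contDiffAt_radial_log hy0) _ (-m₀),
        laplacian_radial_log hy0]
      have hcoef : ((2 * (2:ℕ) - 4 : ℝ)) = 0 := by norm_num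
      rw [hcoef, zero_div, mul_zero, add_zero]
      exact hlap y
    · intro y hy
      rcases hy with hy | hy
      · have h1 : Real.log (‖y‖ ^ 2) = 0 := by rw [hy]; norm_num
        have := hsphere y hy
        rw [hw]
        simp only [h1, mul_zero]
        linarith
      · have h1 : m₀ / Real.log (R ^ 2) * Real.log (‖y‖ ^ 2) = m₀ := by
          rw [hy]
          exact div_mul_cancel₀ m₀ hlogR.ne'
        have := (hpos y).le
        rw [hw]
        simp only [h1]
        linarith
  have htend : Filter.Tendsto (fun R : ℝ => Real.log (R ^ 2)) Filter.atTop Filter.atTop :=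
    Real.tendsto_log_atTop.comp (tendsto_pow_atTop (by norm_num : (2:ℕ) ≠ 0))
  have hlim : Filter.Tendsto (fun R : ℝ => m₀ - m₀ * Real.log (‖x‖ ^ 2) / Real.log (R ^ 2))
      Filter.atTop (nhds (m₀ - 0)) :=
    Filter.Tendsto.sub tendsto_const_nhds (Filter.Tendsto.const_div_atTop htend _)
  have := le_of_tendsto hlim ((Filter.eventually_gt_atTop (max ‖x‖ 1)).mono fun R hR => key R hR)
  simpa using this

end Comparison
section Annulus

lemma annulus_bound {N : ℕ} (hN0 : N ≠ 0) (S : EuclideanSpace ℝ (Fin N) → ℝ)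
    (hmem : MemLp S 2 (volume : Measure (EuclideanSpace ℝ (Fin N))))
    (ρ b : ℝ) (hρ : 1 ≤ ρ) (hb : 0 ≤ b)
    (hbd : ∀ y : EuclideanSpace ℝ (Fin N), ρ ≤ ‖y‖ → ‖y‖ ≤ 2 * ρ → b ≤ S y) :
    b ^ 2 * ((((2 * ρ) ^ N - ρ ^ N))
        * (volume (ball (0:EuclideanSpace ℝ (Fin N)) 1)).toReal)
      ≤ ∫ y, S y ^ 2 := by
  haveI : Nonempty (Fin N) := ⟨⟨0, Nat.pos_of_ne_zero hN0⟩⟩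
  haveI : Nontrivial (EuclideanSpace ℝ (Fin N)) := by
    refine ⟨EuclideanSpace.single (Classical.arbitrary (Fin N)) (1:ℝ), 0, ?_⟩
    intro h
    have := congrArg norm h
    rw [EuclideanSpace.norm_single, norm_zero] at this
    norm_num at this
  have hρ0 : (0:ℝ) < ρ := lt_of_lt_of_le one_pos hρ
  set A : Set (EuclideanSpace ℝ (Fin N)) := closedBall 0 (2 * ρ) \ ball 0 ρ with hA
  have hsub : ball (0:EuclideanSpace ℝ (Fin N)) ρ ⊆ closedBall 0 (2 * ρ) :=
    (ball_subset_ball (by linarith)).trans ball_subset_closedBall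
  have hAm : MeasurableSet A := measurableSet_closedBall.diff measurableSet_ball
  have hfin : volume A ≠ ⊤ :=
    ((measure_mono Set.diff_subset).trans_lt measure_closedBall_lt_top).ne
  have hvol : (volume A).toReal
      = ((2 * ρ) ^ N - ρ ^ N) * (volume (ball (0:EuclideanSpace ℝ (Fin N)) 1)).toReal := by
    rw [hA, measure_diff hsub measurableSet_ball.nullMeasurableSet measure_ball_lt_top.ne,
      Measure.addHaar_closedBall volume 0 (by linarith : (0:ℝ) ≤ 2 * ρ),
      Measure.addHaar_ball volume 0 hρ0.le, finrank_euclideanSpace_fin]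
    rw [← ENNReal.sub_mul (fun _ _ => measure_ball_lt_top.ne)]
    rw [ENNReal.toReal_mul]
    congr 1
    rw [← ENNReal.ofReal_sub _ (by positivity), ENNReal.toReal_ofReal]
    have h2 : ρ ^ N ≤ (2 * ρ) ^ N := pow_le_pow_left₀ hρ0.le (by linarith) N
    linarith
  have hInt : Integrable (fun y => S y ^ 2) volume := hmem.integrable_sq
  have h1 : b ^ 2 * (volume A).toReal ≤ ∫ y in A, S y ^ 2 := by
    refine setIntegral_ge_of_const_le_real hAm hfin (fun y hy => ?_) hInt.integrableOn
    obtain ⟨hy1, hy2⟩ := hy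
    rw [mem_closedBall, dist_zero_right] at hy1
    rw [mem_ball, dist_zero_right, not_lt] at hy2
    exact pow_le_pow_left₀ hb (hbd y hy2 hy1) 2
  have h2 : ∫ y in A, S y ^ 2 ≤ ∫ y, S y ^ 2 :=
    setIntegral_le_integral hInt (Filter.Eventually.of_forall fun y => by positivity)
  rw [← hvol]
  linarith

end Annulus
theorem stmt0 (N : ℕ) (hN : N = 2 ∨ N = 3) (μ₁ μ₂ κ β : ℝ)
    (hμ₁ : 0 < μ₁) (hμ₁₂ : μ₁ ≤ μ₂)
    (hcase : (κ < -1 ∧ -((μ₁ ^ 2 * μ₂) ^ ((1 : ℝ) / 3)) ≤ β) ∨ (κ = -1 ∧ 0 < β)) :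
    ¬ ∃ u v : EuclideanSpace ℝ (Fin N) → ℝ,
      ContDiff ℝ 2 u ∧ ContDiff ℝ 2 v ∧
      (∀ x, 0 < u x) ∧ (∀ x, 0 < v x) ∧
      MemLp u 2 (volume : Measure (EuclideanSpace ℝ (Fin N))) ∧
      MemLp v 2 (volume : Measure (EuclideanSpace ℝ (Fin N))) ∧
      MemLp (fun x => gradient u x) 2 (volume : Measure (EuclideanSpace ℝ (Fin N))) ∧
      MemLp (fun x => gradient v x) 2 (volume : Measure (EuclideanSpace ℝ (Fin N))) ∧
      (∀ x, -laplacian u x + u x = μ₁ * u x ^ 3 + β * u x * v x ^ 2 - κ * v x) ∧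
      (∀ x, -laplacian v x + v x = μ₂ * v x ^ 3 + β * u x ^ 2 * v x - κ * u x) := by
  rintro ⟨u, v, hu, hv, hupos, hvpos, hul2, hvl2, -, -, hequ, heqv⟩
  have hN0 : N ≠ 0 := by rcases hN with rfl | rfl <;> norm_num
  set S : EuclideanSpace ℝ (Fin N) → ℝ := fun y => u y + v y with hSdef
  have hS_cd : ContDiff ℝ 2 S := hu.add hv
  have hSpos : ∀ y, 0 < S y := fun y => add_pos (hupos y) (hvpos y)
  have hSl2 : MemLp S 2 (volume : Measure (EuclideanSpace ℝ (Fin N))) := hul2.add hvl2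
  have hlapS : ∀ x, laplacian S x < 0 := by
    intro x
    have hcombo : laplacian S x = laplacian u x + 1 * laplacian v x := by
      have hfe : S = fun y => u y + 1 * v y + 0 :=
        funext fun y => by rw [hSdef]; exact (by ring : u y + v y = u y + 1 * v y + 0)
      rw [hfe, laplacian_combo hu.contDiffAt hv.contDiffAt 1 0]
    have h1 := hequ x
    have h2 := heqv x
    have e1 : laplacian u x = u x + κ * v x - μ₁ * u x ^ 3 - β * u x * v x ^ 2 := by linarith
    have e2 : laplacian v x = v x + κ * u x - μ₂ * v x ^ 3 - β * u x ^ 2 * v x := by linarith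
    rw [hcombo, e1, e2]
    rcases hcase with ⟨hκ, hβ⟩ | ⟨hκ, hβ⟩
    · have hF := cube_ineq μ₁ μ₂ hμ₁ hμ₁₂ (hupos x).le (hvpos x).le
      have hprod : (0:ℝ) ≤ u x ^ 2 * v x + u x * v x ^ 2 :=
        add_nonneg (mul_nonneg (pow_nonneg (hupos x).le 2) (hvpos x).le)
          (mul_nonneg (hupos x).le (pow_nonneg (hvpos x).le 2))
      have hβ' : -((μ₁ ^ 2 * μ₂) ^ ((1:ℝ)/3)) * (u x ^ 2 * v x + u x * v x ^ 2)
          ≤ β * (u x ^ 2 * v x + u x * v x ^ 2) := mul_le_mul_of_nonneg_right hβ hprod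
      have hneg : (1 + κ) * (u x + v x) < 0 :=
        mul_neg_of_neg_of_pos (by linarith) (hSpos x)
      nlinarith [hF, hβ', hneg]
    · subst hκ
      have p1 : 0 < μ₁ * u x ^ 3 := mul_pos hμ₁ (pow_pos (hupos x) 3)
      have p2 : 0 < μ₂ * v x ^ 3 := mul_pos (lt_of_lt_of_le hμ₁ hμ₁₂) (pow_pos (hvpos x) 3)
      have p3 : 0 < β * (u x ^ 2 * v x) := mul_pos hβ (mul_pos (pow_pos (hupos x) 2) (hvpos x))
      have p4 : 0 < β * (u x * v x ^ 2) := mul_pos hβ (mul_pos (hupos x) (pow_pos (hvpos x) 2))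
      nlinarith [p1, p2, p3, p4]
  haveI : Nonempty (Fin N) := ⟨⟨0, Nat.pos_of_ne_zero hN0⟩⟩
  haveI : Nontrivial (EuclideanSpace ℝ (Fin N)) := by
    refine ⟨EuclideanSpace.single (Classical.arbitrary (Fin N)) (1:ℝ), 0, ?_⟩
    intro h
    have := congrArg norm h
    rw [EuclideanSpace.norm_single, norm_zero] at this
    norm_num at this
  obtain ⟨z₀, hz₀mem, hz₀min⟩ :=
    (isCompact_sphere (0:EuclideanSpace ℝ (Fin N)) 1).exists_isMinOn
      (NormedSpace.sphere_nonempty.mpr zero_le_one) hS_cd.continuous.continuousOn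
  set m₀ : ℝ := S z₀ with hm₀def
  have hm₀ : 0 < m₀ := hSpos z₀
  have hsphere : ∀ y : EuclideanSpace ℝ (Fin N), ‖y‖ = 1 → m₀ ≤ S y := fun y hy =>
    hz₀min (mem_sphere_zero_iff_norm.mpr hy)
  set V : ℝ := (volume (ball (0:EuclideanSpace ℝ (Fin N)) 1)).toReal with hV
  have hVpos : 0 < V := by
    rw [hV]
    exact ENNReal.toReal_pos (measure_ball_pos volume 0 one_pos).ne' measure_ball_lt_top.ne
  have hI0 : (0:ℝ) ≤ ∫ y, S y ^ 2 := integral_nonneg fun y => by positivity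
  set I : ℝ := ∫ y, S y ^ 2 with hI
  rcases hN with rfl | rfl
  · -- N = 2
    have hbd := comparison2 S hS_cd hSpos hlapS m₀ hm₀ hsphere
    set ρ : ℝ := max 1 ((I + 1) / (3 * m₀ ^ 2 * V)) with hρdef
    have hρ1 : (1:ℝ) ≤ ρ := le_max_left _ _
    have key := annulus_bound (by norm_num) S hSl2 ρ m₀ hρ1 hm₀.le
      (fun y hy1 _ => hbd y (le_trans hρ1 hy1))
    have hden : (0:ℝ) < 3 * m₀ ^ 2 * V := by positivity
    have hρ2 : (I + 1) / (3 * m₀ ^ 2 * V) ≤ ρ := le_max_right _ _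
    have hlin : I + 1 ≤ 3 * m₀ ^ 2 * V * ρ := by
      rw [div_le_iff₀ hden] at hρ2
      linarith
    have hρsq : ρ ≤ ρ ^ 2 := by nlinarith [hρ1]
    have h4 : 3 * m₀ ^ 2 * V * ρ ≤ 3 * m₀ ^ 2 * V * ρ ^ 2 :=
      mul_le_mul_of_nonneg_left hρsq hden.le
    nlinarith [key, h4, hlin]
  · -- N = 3
    have hbd := comparison3 S hS_cd hSpos hlapS m₀ hm₀ hsphere
    set ρ : ℝ := max 1 ((I + 1) / ((7/4) * m₀ ^ 2 * V)) with hρdef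
    have hρ1 : (1:ℝ) ≤ ρ := le_max_left _ _
    have hρ0 : (0:ℝ) < ρ := lt_of_lt_of_le one_pos hρ1
    have hbball : ∀ y : EuclideanSpace ℝ (Fin 3), ρ ≤ ‖y‖ → ‖y‖ ≤ 2 * ρ →
        m₀ * (2 * ρ)⁻¹ ≤ S y := by
      intro y hy1 hy2
      have hy0 : (0:ℝ) < ‖y‖ := lt_of_lt_of_le hρ0 hy1
      have hinv : (2 * ρ)⁻¹ ≤ ‖y‖⁻¹ := inv_anti₀ hy0 hy2
      calc m₀ * (2 * ρ)⁻¹ ≤ m₀ * ‖y‖⁻¹ := mul_le_mul_of_nonneg_left hinv hm₀.le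
        _ ≤ S y := hbd y (le_trans hρ1 hy1)
    have key := annulus_bound (by norm_num) S hSl2 ρ (m₀ * (2 * ρ)⁻¹) hρ1
      (by positivity) hbball
    have e3 : (m₀ * (2 * ρ)⁻¹) ^ 2 * (((2 * ρ) ^ 3 - ρ ^ 3) * V)
        = (7/4) * m₀ ^ 2 * V * ρ := by
      field_simp
      ring
    rw [e3] at key
    have hden : (0:ℝ) < (7/4) * m₀ ^ 2 * V := by positivity
    have hρ2 : (I + 1) / ((7/4) * m₀ ^ 2 * V) ≤ ρ := le_max_right _ _
    have hlin : I + 1 ≤ (7/4) * m₀ ^ 2 * V * ρ := by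
      rw [div_le_iff₀ hden] at hρ2
      linarith
    linarith [key, hlin]
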